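/- Suppose X⋆ ∈ ℝ^{I₁×I₂×I₃} has tubal rank R with skinny t-SVD X⋆ = U⋆*Σ⋆*V⋆ᵀ satisfying the tensor μ-incoherence conditions, let 0 < ε < 1 and 0 < τ ≤ 1, and let Q_k be an optimal alignment tensor between (L_k,R_k) and (L⋆,R⋆). If dist(L_k,R_k;L⋆,R⋆) ≤ (ε/√I₃)·τ^k·σ_min(X⋆) and √I₁·‖Δ_L*Σ⋆^{1/2}‖_{2,∞} ∨ √I₂·‖Δ_R*Σ⋆^{1/2}‖_{2,∞} ≤ √(μR)·τ^k·σ_min(X⋆), where Δ_L := L_k*Q_k − L⋆ and Δ_R := R_k*Q_k^{−ᵀ} − R⋆, then ‖X⋆ − L_k*R_kᵀ‖_∞ ≤ (3/√(I₁I₂))·μR·τ^k·σ_min(X⋆). -/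

import Mathlib

open scoped BigOperators
open Matrix

/-- An order-3 real tensor. -/
abbrev Tensor (I₁ I₂ I₃ : ℕ) := Fin I₁ → Fin I₂ → Fin I₃ → ℝ

namespace RTPCA

variable {I₁ I₂ I₃ J R : ℕ}

/-- The t-product, computed by circular convolution along the third mode
(equivalently, slice-wise products in the Fourier domain). -/
noncomputable def tprod (A : Tensor I₁ I₂ I₃) (B : Tensor I₂ J I₃) : Tensor I₁ J I₃ :=
  fun i j k => ∑ l : Fin I₂, ∑ t : Fin I₃, A i l t * B l j (k - t)

/-- The tensor transpose: transpose each frontal slice and reverse the order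
of the frontal slices 2 through I₃. -/
def tT (A : Tensor I₁ I₂ I₃) : Tensor I₂ I₁ I₃ :=
  fun j i k => A i j (-k)

/-- The identity tensor: first frontal slice is the identity, the rest are zero. -/
def idT (R I₃ : ℕ) : Tensor R R I₃ :=
  fun i j k => if i = j ∧ (k : ℕ) = 0 then 1 else 0

/-- Discrete Fourier transform along the third mode. -/
noncomputable def dft (A : Tensor I₁ I₂ I₃) (i : Fin I₁) (j : Fin I₂) (k : Fin I₃) : ℂ :=
  ∑ t : Fin I₃, (A i j t : ℂ) *
    Complex.exp (-(2 * Real.pi * Complex.I * (k.val : ℂ) * (t.val : ℂ)) / (I₃ : ℂ))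

/-- Fourier-domain frontal slice. -/
noncomputable def fSlice (A : Tensor I₁ I₂ I₃) (k : Fin I₃) : Matrix (Fin I₁) (Fin I₂) ℂ :=
  Matrix.of fun i j => dft A i j k

/-- Inverse DFT along the third mode (real part). -/
noncomputable def invDft (F : Fin I₁ → Fin I₂ → Fin I₃ → ℂ) : Tensor I₁ I₂ I₃ :=
  fun i j t =>
    ((∑ k : Fin I₃, F i j k *
      Complex.exp ((2 * Real.pi * Complex.I * (k.val : ℂ) * (t.val : ℂ)) / (I₃ : ℂ))) / (I₃ : ℂ)).re

/-- Squared Frobenius norm. -/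
noncomputable def fro2 (A : Tensor I₁ I₂ I₃) : ℝ := ∑ i, ∑ j, ∑ k, (A i j k) ^ 2

/-- Frobenius norm. -/
noncomputable def froNorm (A : Tensor I₁ I₂ I₃) : ℝ := Real.sqrt (fro2 A)

/-- Entrywise sup norm ‖A‖_∞. -/
noncomputable def infNorm (A : Tensor I₁ I₂ I₃) : ℝ := ⨆ i, ⨆ j, ⨆ k, |A i j k|

/-- ℓ_{2,∞} norm: largest ℓ₂ norm of a horizontal slice. -/
noncomputable def twoInfNorm (A : Tensor I₁ I₂ I₃) : ℝ :=
  ⨆ i, Real.sqrt (∑ j, ∑ k, (A i j k) ^ 2)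

/-- ℓ_{1,∞} norm: largest ℓ₁ norm of a horizontal slice. -/
noncomputable def oneInfNorm (A : Tensor I₁ I₂ I₃) : ℝ := ⨆ i, ∑ j, ∑ k, |A i j k|

/-- Spectral norm (largest singular value) of a complex matrix. -/
noncomputable def matSpecNorm {m n : ℕ} (M : Matrix (Fin m) (Fin n) ℂ) : ℝ :=
  ‖LinearMap.toContinuousLinearMap (Matrix.toEuclideanLin M)‖

/-- Tensor spectral norm = tensor operator norm: the largest singular value of
the Fourier-domain frontal slices. -/
noncomputable def specNorm (A : Tensor I₁ I₂ I₃) : ℝ :=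
  ⨆ k : Fin I₃, matSpecNorm (fSlice A k)

/-- f-diagonal in the Fourier domain with strictly positive diagonal entries. -/
def FDiagPos (S : Tensor R R I₃) : Prop :=
  (∀ k, ∀ i j : Fin R, i ≠ j → fSlice S k i j = 0) ∧
  (∀ k, ∀ i : Fin R, 0 < (fSlice S k i i).re ∧ (fSlice S k i i).im = 0)

/-- f-diagonal in the Fourier domain with nonnegative diagonal entries. -/
def FDiagNonneg (S : Tensor R R I₃) : Prop :=
  (∀ k, ∀ i j : Fin R, i ≠ j → fSlice S k i j = 0) ∧
  (∀ k, ∀ i : Fin R, 0 ≤ (fSlice S k i i).re ∧ (fSlice S k i i).im = 0)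

/-- Skinny t-SVD with tubal rank R (strictly positive Fourier-domain diagonal). -/
structure IsSkinnyTSVD (X : Tensor I₁ I₂ I₃) (U : Tensor I₁ R I₃)
    (S : Tensor R R I₃) (V : Tensor I₂ R I₃) : Prop where
  decomp : X = tprod (tprod U S) (tT V)
  orthU : tprod (tT U) U = idT R I₃
  orthV : tprod (tT V) V = idT R I₃
  diag : FDiagPos S

/-- Skinny t-SVD with tubal rank at most R (nonnegative diagonal allowed). -/
structure IsSkinnyTSVDLe (X : Tensor I₁ I₂ I₃) (U : Tensor I₁ R I₃)
    (S : Tensor R R I₃) (V : Tensor I₂ R I₃) : Prop where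
  decomp : X = tprod (tprod U S) (tT V)
  orthU : tprod (tT U) U = idT R I₃
  orthV : tprod (tT V) V = idT R I₃
  diag : FDiagNonneg S

/-- σ_min: the smallest Fourier-domain diagonal entry of Σ. -/
noncomputable def sigmaMin (S : Tensor R R I₃) : ℝ :=
  ⨅ k : Fin I₃, ⨅ i : Fin R, (fSlice S k i i).re

/-- σ_max (= σ₁): the largest Fourier-domain diagonal entry of Σ. -/
noncomputable def sigmaMax (S : Tensor R R I₃) : ℝ :=
  ⨆ k : Fin I₃, ⨆ i : Fin R, (fSlice S k i i).re

/-- Condition number κ = σ_max / σ_min. -/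
noncomputable def condNum (S : Tensor R R I₃) : ℝ := sigmaMax S / sigmaMin S

/-- Σ^{1/2}: entrywise square roots in the Fourier domain. -/
noncomputable def sqrtT (S : Tensor R R I₃) : Tensor R R I₃ :=
  invDft fun i j k => (Real.sqrt ((dft S i j k).re) : ℂ)

/-- Σ^{-1/2}: entrywise reciprocal square roots in the Fourier domain. -/
noncomputable def invSqrtT (S : Tensor R R I₃) : Tensor R R I₃ :=
  invDft fun i j k => (((Real.sqrt ((dft S i j k).re))⁻¹ : ℝ) : ℂ)

/-- `Qi` is a two-sided t-product inverse of `Q` (i.e. `Q ∈ GL(R)`). -/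
def TInv (Q Qi : Tensor R R I₃) : Prop :=
  tprod Q Qi = idT R I₃ ∧ tprod Qi Q = idT R I₃

/-- Alignment error (the quantity inside the infimum defining `distT`)
for a given invertible Q with inverse Qi. -/
noncomputable def alignErr (L Ls : Tensor I₁ R I₃) (Rt Rs : Tensor I₂ R I₃)
    (Sh : Tensor R R I₃) (Q Qi : Tensor R R I₃) : ℝ :=
  Real.sqrt ((froNorm (tprod (tprod L Q - Ls) Sh)) ^ 2 +
    (froNorm (tprod (tprod Rt (tT Qi) - Rs) Sh)) ^ 2)

/-- The distance metric dist(L,R;L⋆,R⋆): the infimum of alignment errors over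
invertible tensors Q, where `Sh` is Σ⋆^{1/2}. -/
noncomputable def distT (L Ls : Tensor I₁ R I₃) (Rt Rs : Tensor I₂ R I₃)
    (Sh : Tensor R R I₃) : ℝ :=
  sInf {d : ℝ | ∃ Q Qi : Tensor R R I₃, TInv Q Qi ∧ d = alignErr L Ls Rt Rs Sh Q Qi}

/-- Q (with inverse Qi) is an optimal alignment tensor: it attains the infimum
defining the distance metric. -/
def IsOptAlign (L Ls : Tensor I₁ R I₃) (Rt Rs : Tensor I₂ R I₃)
    (Sh : Tensor R R I₃) (Q Qi : Tensor R R I₃) : Prop :=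
  TInv Q Qi ∧ alignErr L Ls Rt Rs Sh Q Qi = distT L Ls Rt Rs Sh

/-- Entrywise soft-thresholding. -/
noncomputable def softThresh (ζ : ℝ) (A : Tensor I₁ I₂ I₃) : Tensor I₁ I₂ I₃ :=
  fun i j k => Real.sign (A i j k) * max 0 (|A i j k| - ζ)

/-- Support: the set of index triples at which the tensor is nonzero. -/
def supp (A : Tensor I₁ I₂ I₃) : Set (Fin I₁ × Fin I₂ × Fin I₃) :=
  {p | A p.1 p.2.1 p.2.2 ≠ 0}

/-- α-sparsity: every horizontal, lateral and frontal slice has at most an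
α fraction of nonzero entries. -/
def IsSparse (α : ℝ) (S : Tensor I₁ I₂ I₃) : Prop :=
  (∀ i₁ : Fin I₁, ({p : Fin I₂ × Fin I₃ | S i₁ p.1 p.2 ≠ 0}.ncard : ℝ) ≤ α * I₂ * I₃) ∧
  (∀ i₂ : Fin I₂, ({p : Fin I₁ × Fin I₃ | S p.1 i₂ p.2 ≠ 0}.ncard : ℝ) ≤ α * I₁ * I₃) ∧
  (∀ i₃ : Fin I₃, ({p : Fin I₁ × Fin I₂ | S p.1 p.2 i₃ ≠ 0}.ncard : ℝ) ≤ α * I₁ * I₂)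

/-- Tensor μ-incoherence conditions for the skinny t-SVD factors U, V. -/
def Incoherent (μ : ℝ) (U : Tensor I₁ R I₃) (V : Tensor I₂ R I₃) : Prop :=
  twoInfNorm U ≤ Real.sqrt (μ * R / I₁) ∧ twoInfNorm V ≤ Real.sqrt (μ * R / I₂)

/-- Top-R truncated t-SVD of A: a skinny t-SVD-shaped factorization which, in
every Fourier-domain frontal slice, keeps R largest singular values together
with their singular vectors (the residual is orthogonal to the kept singular
vectors and its spectral norm is at most every kept singular value). -/
structure IsTruncTSVD (A : Tensor I₁ I₂ I₃) (U : Tensor I₁ R I₃)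
    (S : Tensor R R I₃) (V : Tensor I₂ R I₃) : Prop where
  orthU : tprod (tT U) U = idT R I₃
  orthV : tprod (tT V) V = idT R I₃
  diag : FDiagNonneg S
  leftOrth : ∀ k, (fSlice U k)ᴴ * (fSlice A k - fSlice (tprod (tprod U S) (tT V)) k) = 0
  rightOrth : ∀ k, (fSlice A k - fSlice (tprod (tprod U S) (tT V)) k) * fSlice V k = 0
  topR : ∀ k, ∀ r : Fin R,
    matSpecNorm (fSlice A k - fSlice (tprod (tprod U S) (tT V)) k) ≤ (fSlice S k r r).re

end RTPCA

open RTPCA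


open Complex Finset

namespace RTPCAaux

/-- Fourier kernel: `exp(-2πi a b / n)`. -/
noncomputable def ef (n : ℕ) (a b : ℤ) : ℂ :=
  Complex.exp (-(2 * Real.pi * Complex.I * a * b) / n)

lemma ef_comm (n : ℕ) (a b : ℤ) : ef n a b = ef n b a := by
  unfold ef; ring_nf

lemma ef_add_right (n : ℕ) (a b c : ℤ) : ef n a (b + c) = ef n a b * ef n a c := by
  unfold ef; rw [← Complex.exp_add]; congr 1; push_cast; ring

lemma ef_add_left (n : ℕ) (a b c : ℤ) : ef n (a + b) c = ef n a c * ef n b c := by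
  rw [ef_comm, ef_add_right, ef_comm n c a, ef_comm n c b]

lemma ef_zero_right (n : ℕ) (a : ℤ) : ef n a 0 = 1 := by
  unfold ef; norm_num

lemma ef_mul_right (n : ℕ) (hn : n ≠ 0) (a q : ℤ) : ef n a ((n : ℤ) * q) = 1 := by
  unfold ef
  have h : -(2 * (Real.pi:ℂ) * Complex.I * a * ((n:ℤ) * q : ℤ)) / n
      = ((-(a * q) : ℤ) : ℂ) * (2 * (Real.pi:ℂ) * Complex.I) := by
    have hn' : (n:ℂ) ≠ 0 := Nat.cast_ne_zero.mpr hn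
    field_simp
    push_cast
    ring
  rw [h, Complex.exp_int_mul_two_pi_mul_I]

lemma ef_period_right (n : ℕ) (hn : n ≠ 0) (a b q : ℤ) :
    ef n a (b + (n:ℤ) * q) = ef n a b := by
  rw [ef_add_right, ef_mul_right n hn, mul_one]

lemma conj_ef (n : ℕ) (a b : ℤ) : (starRingEnd ℂ) (ef n a b) = ef n a (-b) := by
  unfold ef
  rw [← Complex.exp_conj]
  congr 1
  simp only [map_div₀, map_neg, _root_.map_mul, Complex.conj_I, Complex.conj_ofReal,
    map_ofNat, map_intCast, map_natCast]
  push_cast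
  ring

lemma ef_pow (n : ℕ) (j : ℕ) (m : ℤ) : ef n (j : ℤ) m = ef n 1 m ^ j := by
  unfold ef
  rw [← Complex.exp_nat_mul]
  congr 1
  push_cast
  ring

lemma ef_one_of_dvd (n : ℕ) (hn : n ≠ 0) {m : ℤ} (h : (n:ℤ) ∣ m) : ef n 1 m = 1 := by
  obtain ⟨c, rfl⟩ := h
  exact ef_mul_right n hn 1 c

lemma dvd_of_ef_one (n : ℕ) (hn : n ≠ 0) {m : ℤ} (h : ef n 1 m = 1) : (n:ℤ) ∣ m := by
  unfold ef at h
  rw [Complex.exp_eq_one_iff] at h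
  obtain ⟨q, hq⟩ := h
  have hn' : (n:ℂ) ≠ 0 := Nat.cast_ne_zero.mpr hn
  have hπ : (2 * (Real.pi:ℂ) * Complex.I) ≠ 0 := by
    simp [Real.pi_ne_zero, Complex.I_ne_zero, Complex.ofReal_ne_zero]
  have key : ((-m : ℤ) : ℂ) * (2 * (Real.pi:ℂ) * Complex.I)
      = ((q * n : ℤ) : ℂ) * (2 * (Real.pi:ℂ) * Complex.I) := by
    have := hq
    field_simp at this ⊢
    push_cast
    linear_combination this
  have : ((-m : ℤ) : ℂ) = ((q * n : ℤ) : ℂ) := mul_right_cancel₀ hπ key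
  have h2 : -m = q * n := by exact_mod_cast this
  exact ⟨-q, by linarith⟩

lemma kernel_sum (n : ℕ) (hn : 0 < n) (m : ℤ) :
    ∑ k : Fin n, ef n (k.val : ℤ) m = if (n:ℤ) ∣ m then (n:ℂ) else 0 := by
  have hrw : ∀ k : Fin n, ef n (k.val : ℤ) m = ef n 1 m ^ (k.val) := fun k => ef_pow n k.val m
  simp only [hrw]
  rw [Fin.sum_univ_eq_sum_range (fun j => ef n 1 m ^ j) n]
  by_cases h : (n:ℤ) ∣ m
  · simp [ef_one_of_dvd n hn.ne' h, h]
  · have hz : ef n 1 m ≠ 1 := fun hc => h (dvd_of_ef_one n hn.ne' hc)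
    rw [if_neg h, geom_sum_eq hz]
    have hzn : ef n 1 m ^ n = 1 := by
      rw [← ef_pow, ef_comm, ← mul_one ((n:ℕ):ℤ)]
      exact ef_mul_right n hn.ne' m 1
    rw [hzn]
    simp

lemma kernel_fin {n : ℕ} (a b : Fin n) :
    ∑ t : Fin n, ef n (t.val : ℤ) ((a.val : ℤ) - b.val) = if a = b then (n:ℂ) else 0 := by
  rw [kernel_sum n a.pos]
  congr 1
  simp only [eq_iff_iff]
  constructor
  · intro h
    have h0 : ((a.val : ℤ) - b.val) = 0 := by
      refine Int.eq_zero_of_abs_lt_dvd h ?_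
      have := a.isLt; have := b.isLt
      rw [abs_sub_lt_iff]
      omega
    have : a.val = b.val := by omega
    exact Fin.ext this
  · rintro rfl; simp

end RTPCAaux
namespace RTPCAaux

lemma fin_add_val {n : ℕ} (s u : Fin n) :
    ∃ q : ℤ, (((s + u).val : ℤ)) = (s.val : ℤ) + u.val + (n:ℤ) * q := by
  have h := Nat.mod_add_div (s.val + u.val) n
  have hv : (s + u).val = (s.val + u.val) % n := Fin.val_add s u
  refine ⟨-(((s.val + u.val) / n : ℕ) : ℤ), ?_⟩
  have h' : ((s.val + u.val) % n : ℤ) + (n:ℤ) * (((s.val + u.val) / n : ℕ) : ℤ)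
      = (s.val : ℤ) + u.val := by exact_mod_cast h
  rw [hv]
  push_cast
  linarith

lemma fin_neg_val {n : ℕ} (t : Fin n) :
    ∃ q : ℤ, (((-t).val : ℤ)) = -(t.val : ℤ) + (n:ℤ) * q := by
  haveI : NeZero n := ⟨t.pos.ne'⟩
  have h : (-t) + t = 0 := neg_add_cancel t
  have hv : ((-t) + t).val = ((-t).val + t.val) % n := Fin.val_add _ _
  have h0 : ((-t).val + t.val) % n = 0 := by rw [← hv, h]; rfl
  obtain ⟨c, hc⟩ := Nat.dvd_of_mod_eq_zero h0
  refine ⟨(c : ℤ), ?_⟩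
  have : ((-t).val : ℤ) + t.val = (n:ℤ) * c := by exact_mod_cast hc
  linarith

lemma ef_fin_add {n : ℕ} (a : ℤ) (s u : Fin n) :
    ef n a (((s + u).val : ℤ)) = ef n a (s.val : ℤ) * ef n a (u.val : ℤ) := by
  obtain ⟨q, hq⟩ := fin_add_val s u
  rw [hq, add_assoc, ef_add_right, ef_period_right n s.pos.ne']

lemma ef_fin_neg {n : ℕ} (a : ℤ) (t : Fin n) :
    ef n a (((-t).val : ℤ)) = ef n a (-(t.val : ℤ)) := by
  obtain ⟨q, hq⟩ := fin_neg_val t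
  rw [hq, ef_period_right n t.pos.ne']

end RTPCAaux
namespace RTPCAaux
open RTPCA

variable {I₁ I₂ I₃ J R : ℕ}

lemma tprod_apply (A : Tensor I₁ I₂ I₃) (B : Tensor I₂ J I₃) (i j k) :
    tprod A B i j k = ∑ l : Fin I₂, ∑ t : Fin I₃, A i l t * B l j (k - t) := rfl

lemma tT_apply (A : Tensor I₁ I₂ I₃) (j i k) : tT A j i k = A i j (-k) := rfl

lemma ef_neg_left (n : ℕ) (a b : ℤ) : ef n (-a) b = ef n a (-b) := by
  unfold ef; congr 1; push_cast; ring

lemma ef_fin_neg_left {n : ℕ} (t : Fin n) (b : ℤ) :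
    ef n (((-t).val : ℤ)) b = ef n (-(t.val : ℤ)) b := by
  rw [ef_comm, ef_fin_neg, ef_comm]

lemma dft_eq (A : Tensor I₁ I₂ I₃) (i : Fin I₁) (j : Fin I₂) (k : Fin I₃) :
    dft A i j k = ∑ t, (A i j t : ℂ) * ef I₃ (k.val : ℤ) (t.val : ℤ) := by
  unfold dft ef
  push_cast
  rfl

lemma fSlice_apply (A : Tensor I₁ I₂ I₃) (k : Fin I₃) (i j) :
    fSlice A k i j = dft A i j k := rfl

lemma fSlice_sub (A B : Tensor I₁ I₂ I₃) (k : Fin I₃) :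
    fSlice (A - B) k = fSlice A k - fSlice B k := by
  ext i j
  simp [fSlice_apply, dft_eq, Matrix.sub_apply, sub_mul, Finset.sum_sub_distrib,
    Pi.sub_apply]

lemma fSlice_tprod (A : Tensor I₁ I₂ I₃) (B : Tensor I₂ J I₃) (k : Fin I₃) :
    fSlice (tprod A B) k = fSlice A k * fSlice B k := by
  haveI : NeZero I₃ := ⟨k.pos.ne'⟩
  ext i j
  rw [Matrix.mul_apply]
  simp only [fSlice_apply, dft_eq, tprod_apply]
  calc ∑ t, ((∑ l, ∑ s, A i l s * B l j (t - s) : ℝ) : ℂ) * ef I₃ k.val t.val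
      = ∑ l, ∑ s, ∑ t, ((A i l s : ℂ) * (B l j (t - s) : ℂ)) * ef I₃ k.val t.val := by
        push_cast
        simp only [Finset.sum_mul]
        rw [Finset.sum_comm]
        exact Finset.sum_congr rfl fun l _ => Finset.sum_comm
    _ = ∑ l, ∑ s, ∑ u, ((A i l s : ℂ) * (B l j u : ℂ)) *
          (ef I₃ k.val s.val * ef I₃ k.val u.val) := by
        refine Finset.sum_congr rfl fun l _ => Finset.sum_congr rfl fun s _ => ?_
        rw [← Equiv.sum_comp (Equiv.addRight s)
          (fun t => ((A i l s : ℂ) * (B l j (t - s) : ℂ)) * ef I₃ k.val t.val)]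
        refine Finset.sum_congr rfl fun u _ => ?_
        simp only [Equiv.coe_addRight, add_sub_cancel_right]
        rw [ef_fin_add]
        ring
    _ = ∑ l, (∑ s, (A i l s : ℂ) * ef I₃ k.val s.val) *
          (∑ u, (B l j u : ℂ) * ef I₃ k.val u.val) := by
        refine Finset.sum_congr rfl fun l _ => ?_
        rw [Finset.sum_mul]
        refine Finset.sum_congr rfl fun s _ => ?_
        rw [Finset.mul_sum]
        refine Finset.sum_congr rfl fun u _ => ?_
        ring

lemma dft_tT (A : Tensor I₁ I₂ I₃) (j : Fin I₂) (i : Fin I₁) (k : Fin I₃) :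
    dft (tT A) j i k = (starRingEnd ℂ) (dft A i j k) := by
  haveI : NeZero I₃ := ⟨k.pos.ne'⟩
  simp only [dft_eq, tT_apply, map_sum]
  calc ∑ t, ((A i j (-t) : ℝ) : ℂ) * ef I₃ k.val t.val
      = ∑ u, ((A i j u : ℝ) : ℂ) * ef I₃ k.val ((-u).val : ℤ) := by
        rw [← Equiv.sum_comp (Equiv.neg (Fin I₃))
          (fun u => ((A i j u : ℝ) : ℂ) * ef I₃ k.val ((-u).val : ℤ))]
        refine Finset.sum_congr rfl fun t _ => ?_
        simp [neg_neg]
    _ = ∑ t, (starRingEnd ℂ) (((A i j t : ℝ) : ℂ) * ef I₃ k.val t.val) := by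
        refine Finset.sum_congr rfl fun u _ => ?_
        rw [_root_.map_mul, conj_ef, Complex.conj_ofReal, ef_fin_neg]

lemma fSlice_tT (A : Tensor I₁ I₂ I₃) (k : Fin I₃) :
    fSlice (tT A) k = (fSlice A k)ᴴ := by
  ext j i
  rw [Matrix.conjTranspose_apply, fSlice_apply, fSlice_apply, dft_tT]
  rfl

lemma dft_neg_fin (A : Tensor I₁ I₂ I₃) (i : Fin I₁) (j : Fin I₂) (k : Fin I₃) :
    dft A i j (-k) = (starRingEnd ℂ) (dft A i j k) := by
  simp only [dft_eq, map_sum]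
  refine Finset.sum_congr rfl fun t _ => ?_
  rw [_root_.map_mul, Complex.conj_ofReal, conj_ef, ef_fin_neg_left, ef_neg_left]

lemma tensor_eq_of_fSlice {A B : Tensor I₁ I₂ I₃}
    (h : ∀ k, fSlice A k = fSlice B k) : A = B := by
  funext i j t
  haveI : NeZero I₃ := ⟨t.pos.ne'⟩
  have key : ∀ C : Tensor I₁ I₂ I₃,
      ∑ k : Fin I₃, dft C i j k * ef I₃ (t.val : ℤ) (-(k.val : ℤ))
        = (I₃ : ℂ) * (C i j t : ℂ) := by
    intro C
    simp only [dft_eq, Finset.sum_mul]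
    rw [Finset.sum_comm]
    have step : ∀ s : Fin I₃,
        ∑ k : Fin I₃, (C i j s : ℂ) * ef I₃ (k.val : ℤ) (s.val : ℤ) *
          ef I₃ (t.val : ℤ) (-(k.val : ℤ))
        = (C i j s : ℂ) * (if s = t then (I₃ : ℂ) else 0) := by
      intro s
      have e1 : ∀ kk : Fin I₃, (C i j s : ℂ) * ef I₃ (kk.val : ℤ) (s.val : ℤ) *
          ef I₃ (t.val : ℤ) (-(kk.val : ℤ))
          = (C i j s : ℂ) * ef I₃ (kk.val : ℤ) ((s.val : ℤ) - (t.val : ℤ)) := by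
        intro kk
        rw [sub_eq_add_neg, ef_add_right, ef_comm I₃ (t.val : ℤ) (-(kk.val : ℤ)),
          ef_neg_left]
        ring
      rw [Finset.sum_congr rfl fun kk _ => e1 kk, ← Finset.mul_sum, kernel_fin s t]
    rw [Finset.sum_congr rfl fun s _ => step s]
    rw [Finset.sum_eq_single t (fun s _ hst => by rw [if_neg hst, mul_zero])
      (fun ht => absurd (Finset.mem_univ t) ht)]
    rw [if_pos rfl]; ring
  have hI : (I₃ : ℂ) ≠ 0 := Nat.cast_ne_zero.mpr t.pos.ne'
  have hAB : (I₃ : ℂ) * (A i j t : ℂ) = (I₃ : ℂ) * (B i j t : ℂ) := by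
    rw [← key A, ← key B]
    refine Finset.sum_congr rfl fun k _ => ?_
    rw [show dft A i j k = fSlice A k i j from rfl, h k, fSlice_apply]
  exact_mod_cast mul_left_cancel₀ hI hAB

lemma fSlice_idT (R I₃ : ℕ) (k : Fin I₃) :
    fSlice (idT R I₃) k = (1 : Matrix (Fin R) (Fin R) ℂ) := by
  haveI : NeZero I₃ := ⟨k.pos.ne'⟩
  ext i j
  simp only [fSlice_apply, dft_eq, idT]
  by_cases hij : i = j
  · subst hij
    rw [Matrix.one_apply_eq]
    have hrw : ∀ t : Fin I₃, ((if i = i ∧ (t : ℕ) = 0 then (1:ℝ) else 0 : ℝ) : ℂ)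
        * ef I₃ (k.val : ℤ) (t.val : ℤ)
        = if t = (0 : Fin I₃) then 1 else 0 := by
      intro t
      by_cases ht : t = 0
      · subst ht
        simp [ef_zero_right]
      · have hv : (t : ℕ) ≠ 0 := fun hc => ht (Fin.ext (by simp [hc]))
        rw [if_neg ht]
        simp [hv]
    rw [Finset.sum_congr rfl fun t _ => hrw t]
    simp
  · rw [Matrix.one_apply_ne hij]
    have hrw : ∀ t : Fin I₃, ((if i = j ∧ (t : ℕ) = 0 then (1:ℝ) else 0 : ℝ) : ℂ)
        * ef I₃ (k.val : ℤ) (t.val : ℤ) = 0 := by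
      intro t; simp [hij]
    rw [Finset.sum_congr rfl fun t _ => hrw t]
    simp

end RTPCAaux
namespace RTPCAaux
open RTPCA

variable {I₁ I₂ I₃ J R : ℕ}

lemma parseval (A : Tensor I₁ I₂ I₃) (i : Fin I₁) (j : Fin I₂) :
    ∑ k : Fin I₃, Complex.normSq (dft A i j k) = (I₃ : ℝ) * ∑ t, (A i j t) ^ 2 := by
  rcases Nat.eq_zero_or_pos I₃ with h | h
  · subst h; simp
  haveI : NeZero I₃ := ⟨h.ne'⟩
  have key : ((∑ k : Fin I₃, Complex.normSq (dft A i j k) : ℝ) : ℂ)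
      = (((I₃ : ℝ) * ∑ t, (A i j t) ^ 2 : ℝ) : ℂ) := by
    push_cast
    have h1 : ∀ k : Fin I₃, (Complex.normSq (dft A i j k) : ℂ)
        = dft A i j k * (starRingEnd ℂ) (dft A i j k) := fun k => (Complex.mul_conj _).symm
    rw [Finset.sum_congr rfl fun k _ => h1 k]
    have h2 : ∀ k : Fin I₃, dft A i j k * (starRingEnd ℂ) (dft A i j k)
        = ∑ s, ∑ t, ((A i j s : ℂ) * (A i j t : ℂ)) *
            ef I₃ (k.val : ℤ) ((s.val : ℤ) - (t.val : ℤ)) := by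
      intro k
      rw [dft_eq, map_sum, Finset.sum_mul]
      refine Finset.sum_congr rfl fun s _ => ?_
      rw [Finset.mul_sum]
      refine Finset.sum_congr rfl fun t _ => ?_
      rw [_root_.map_mul, Complex.conj_ofReal, conj_ef, sub_eq_add_neg, ef_add_right]
      ring
    rw [Finset.sum_congr rfl fun k _ => h2 k]
    rw [Finset.sum_comm]
    have h3 : ∀ s : Fin I₃,
        ∑ k : Fin I₃, ∑ t : Fin I₃, ((A i j s : ℂ) * (A i j t : ℂ)) *
            ef I₃ (k.val : ℤ) ((s.val : ℤ) - (t.val : ℤ))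
        = (A i j s : ℂ) * (A i j s : ℂ) * I₃ := by
      intro s
      rw [Finset.sum_comm]
      have h4 : ∀ t : Fin I₃, ∑ k : Fin I₃, ((A i j s : ℂ) * (A i j t : ℂ)) *
            ef I₃ (k.val : ℤ) ((s.val : ℤ) - (t.val : ℤ))
          = ((A i j s : ℂ) * (A i j t : ℂ)) * (if s = t then (I₃ : ℂ) else 0) := by
        intro t
        rw [← Finset.mul_sum, kernel_fin s t]
      rw [Finset.sum_congr rfl fun t _ => h4 t]
      rw [Finset.sum_eq_single s (fun t _ hts => by rw [if_neg (Ne.symm hts), mul_zero])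
        (fun hs => absurd (Finset.mem_univ s) hs)]
      rw [if_pos rfl]
    rw [Finset.sum_congr rfl fun s _ => h3 s, ← Finset.sum_mul]
    push_cast
    ring_nf
  have := key
  rw [Complex.ofReal_inj] at this
  exact this

lemma dft_invDft (G : Fin I₁ → Fin I₂ → Fin I₃ → ℂ)
    (hre : ∀ i j m, (starRingEnd ℂ) (G i j m) = G i j m)
    (hsym : ∀ i j (m : Fin I₃), G i j (-m) = G i j m)
    (i : Fin I₁) (j : Fin I₂) (k : Fin I₃) :
    dft (invDft G) i j k = G i j k := by
  haveI : NeZero I₃ := ⟨k.pos.ne'⟩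
  have hI : (I₃ : ℂ) ≠ 0 := Nat.cast_ne_zero.mpr k.pos.ne'
  set z : Fin I₃ → ℂ := fun t =>
    (∑ m : Fin I₃, G i j m * ef I₃ (-(m.val : ℤ)) (t.val : ℤ)) / I₃ with hz
  have hexp : ∀ (m t : Fin I₃),
      Complex.exp ((2 * Real.pi * Complex.I * (m.val : ℂ) * (t.val : ℂ)) / (I₃ : ℂ))
        = ef I₃ (-(m.val : ℤ)) (t.val : ℤ) := by
    intro m t
    unfold ef
    congr 1
    push_cast
    ring
  have hinv : ∀ t : Fin I₃, invDft G i j t = (z t).re := by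
    intro t
    unfold invDft
    rw [hz]
    congr 2
    exact Finset.sum_congr rfl fun m _ => by rw [hexp m t]
  have hconj : ∀ t : Fin I₃, (starRingEnd ℂ) (z t) = z t := by
    intro t
    rw [hz]
    simp only [map_div₀, map_sum, _root_.map_mul, map_natCast]
    congr 1
    calc ∑ m : Fin I₃, (starRingEnd ℂ) (G i j m) * (starRingEnd ℂ) (ef I₃ (-(m.val : ℤ)) (t.val : ℤ))
        = ∑ m : Fin I₃, G i j m * ef I₃ ((m.val : ℤ)) (t.val : ℤ) := by
          refine Finset.sum_congr rfl fun m _ => ?_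
          rw [hre, ef_comm, conj_ef, ef_comm, neg_neg]
      _ = ∑ m : Fin I₃, G i j (-m) * ef I₃ (((-m).val : ℤ)) (t.val : ℤ) := by
          rw [← Equiv.sum_comp (Equiv.neg (Fin I₃))
            (fun m => G i j (-m) * ef I₃ (((-m).val : ℤ)) (t.val : ℤ))]
          refine Finset.sum_congr rfl fun m _ => ?_
          simp [neg_neg]
      _ = ∑ m : Fin I₃, G i j m * ef I₃ (-(m.val : ℤ)) (t.val : ℤ) := by
          refine Finset.sum_congr rfl fun m _ => ?_
          rw [hsym, ef_fin_neg_left]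
  have hzre : ∀ t : Fin I₃, (((z t).re : ℝ) : ℂ) = z t := fun t =>
    Complex.conj_eq_iff_re.mp (hconj t)
  rw [dft_eq]
  have step1 : ∀ t : Fin I₃, ((invDft G i j t : ℝ) : ℂ) * ef I₃ (k.val : ℤ) (t.val : ℤ)
      = z t * ef I₃ (k.val : ℤ) (t.val : ℤ) := by
    intro t
    rw [hinv t, hzre t]
  rw [Finset.sum_congr rfl fun t _ => step1 t]
  have step2 : ∀ t : Fin I₃, z t * ef I₃ (k.val : ℤ) (t.val : ℤ)
      = (∑ m : Fin I₃, G i j m * ef I₃ ((k.val : ℤ) - (m.val : ℤ)) (t.val : ℤ)) / I₃ := by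
    intro t
    rw [hz]
    rw [div_mul_eq_mul_div, Finset.sum_mul]
    congr 1
    refine Finset.sum_congr rfl fun m _ => ?_
    rw [mul_assoc, ← ef_add_left]
    congr 2
    ring
  rw [Finset.sum_congr rfl fun t _ => step2 t, ← Finset.sum_div, Finset.sum_comm]
  have step3 : ∀ m : Fin I₃,
      ∑ t : Fin I₃, G i j m * ef I₃ ((k.val : ℤ) - (m.val : ℤ)) (t.val : ℤ)
      = G i j m * (if k = m then (I₃ : ℂ) else 0) := by
    intro m
    rw [← Finset.mul_sum]
    congr 1
    calc ∑ t : Fin I₃, ef I₃ ((k.val : ℤ) - (m.val : ℤ)) (t.val : ℤ)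
        = ∑ t : Fin I₃, ef I₃ (t.val : ℤ) ((k.val : ℤ) - (m.val : ℤ)) :=
          Finset.sum_congr rfl fun t _ => ef_comm _ _ _
      _ = _ := kernel_fin k m
  rw [Finset.sum_congr rfl fun m _ => step3 m]
  rw [Finset.sum_eq_single k (fun m _ hmk => by rw [if_neg (Ne.symm hmk), mul_zero])
    (fun hk => absurd (Finset.mem_univ k) hk)]
  rw [if_pos rfl]
  exact mul_div_cancel_right₀ _ hI

lemma fSlice_sqrtT (Sig : Tensor R R I₃) (hd : FDiagPos Sig) (k : Fin I₃) :
    fSlice (sqrtT Sig) k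
      = Matrix.diagonal (fun i => ((Real.sqrt ((fSlice Sig k i i).re)) : ℂ)) := by
  ext i j
  rw [fSlice_apply]
  unfold sqrtT
  rw [dft_invDft]
  · by_cases hij : i = j
    · subst hij
      rw [Matrix.diagonal_apply_eq, fSlice_apply]
    · rw [Matrix.diagonal_apply_ne _ hij]
      have h0 : dft Sig i j k = 0 := hd.1 k i j hij
      rw [h0]
      simp
  · intro i j m
    exact Complex.conj_ofReal _
  · intro i j m
    rw [dft_neg_fin]
    rw [Complex.ofReal_inj, Complex.conj_re]

end RTPCAaux
namespace RTPCAaux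
open RTPCA

variable {I₁ I₂ I₃ J R : ℕ}

noncomputable def row2 (A : Tensor I₁ I₂ I₃) (i : Fin I₁) : ℝ := ∑ j, ∑ k, (A i j k) ^ 2

lemma row2_nonneg (A : Tensor I₁ I₂ I₃) (i : Fin I₁) : 0 ≤ row2 A i := by
  unfold row2; positivity

lemma twoInfNorm_eq (A : Tensor I₁ I₂ I₃) : twoInfNorm A = ⨆ i, Real.sqrt (row2 A i) := rfl

lemma sqrt_row2_le_twoInfNorm (A : Tensor I₁ I₂ I₃) (i : Fin I₁) :
    Real.sqrt (row2 A i) ≤ twoInfNorm A := by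
  rw [twoInfNorm_eq]
  exact le_ciSup (f := fun i => Real.sqrt (row2 A i)) (Finite.bddAbove_range _) i

lemma twoInfNorm_nonneg (A : Tensor I₁ I₂ I₃) (i : Fin I₁) : 0 ≤ twoInfNorm A :=
  le_trans (Real.sqrt_nonneg _) (sqrt_row2_le_twoInfNorm A i)

lemma tprod_tT_entry_le (X : Tensor I₁ R I₃) (Y : Tensor I₂ R I₃) (i : Fin I₁) (j : Fin I₂)
    (k : Fin I₃) :
    |tprod X (tT Y) i j k| ≤ Real.sqrt (row2 X i) * Real.sqrt (row2 Y j) := by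
  haveI : NeZero I₃ := ⟨k.pos.ne'⟩
  have hentry : tprod X (tT Y) i j k = ∑ p : Fin R × Fin I₃, X i p.1 p.2 * Y j p.1 (p.2 - k) := by
    rw [Fintype.sum_prod_type, tprod_apply]
    refine Finset.sum_congr rfl fun l _ => Finset.sum_congr rfl fun t _ => ?_
    rw [tT_apply, neg_sub]
  have hcs : (∑ p : Fin R × Fin I₃, X i p.1 p.2 * Y j p.1 (p.2 - k)) ^ 2
      ≤ (∑ p : Fin R × Fin I₃, (X i p.1 p.2) ^ 2) *
        (∑ p : Fin R × Fin I₃, (Y j p.1 (p.2 - k)) ^ 2) :=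
    Finset.sum_mul_sq_le_sq_mul_sq _ _ _
  have h1 : (∑ p : Fin R × Fin I₃, (X i p.1 p.2) ^ 2) = row2 X i := by
    rw [Fintype.sum_prod_type]; rfl
  have h2 : (∑ p : Fin R × Fin I₃, (Y j p.1 (p.2 - k)) ^ 2) = row2 Y j := by
    rw [Fintype.sum_prod_type]
    refine Finset.sum_congr rfl fun l _ => ?_
    rw [← Equiv.sum_comp (Equiv.subRight k) (fun t => (Y j l t) ^ 2)]
    rfl
  rw [h1, h2] at hcs
  have h3 := Real.abs_le_sqrt hcs
  rw [hentry]
  rwa [Real.sqrt_mul (row2_nonneg X i)] at h3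

lemma row2_parseval (A : Tensor I₁ I₂ I₃) (i : Fin I₁) :
    (I₃ : ℝ) * row2 A i = ∑ l, ∑ k, Complex.normSq (fSlice A k i l) := by
  unfold row2
  rw [Finset.mul_sum]
  refine Finset.sum_congr rfl fun l _ => ?_
  rw [← parseval A i l]
  rfl

lemma sigmaMin_le (Sig : Tensor R R I₃) (k : Fin I₃) (l : Fin R) :
    sigmaMin Sig ≤ (fSlice Sig k l l).re := by
  unfold sigmaMin
  calc (⨅ k : Fin I₃, ⨅ i : Fin R, (fSlice Sig k i i).re)
      ≤ ⨅ i : Fin R, (fSlice Sig k i i).re := ciInf_le (Finite.bddBelow_range _) k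
    _ ≤ (fSlice Sig k l l).re := ciInf_le (Finite.bddBelow_range _) l

lemma ciInf_pos {ι : Type*} [Finite ι] [Nonempty ι] (f : ι → ℝ) (h : ∀ i, 0 < f i) :
    0 < ⨅ i, f i := by
  obtain ⟨x₀, hx₀⟩ := Finite.exists_min f
  exact lt_of_lt_of_le (h x₀) (le_ciInf hx₀)

lemma sigmaMin_pos (Sig : Tensor R R I₃) (hd : FDiagPos Sig) (hI3 : 0 < I₃) (hR : 0 < R) :
    0 < sigmaMin Sig := by
  haveI : Nonempty (Fin I₃) := Fin.pos_iff_nonempty.mp hI3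
  haveI : Nonempty (Fin R) := Fin.pos_iff_nonempty.mp hR
  unfold sigmaMin
  exact ciInf_pos _ fun k => ciInf_pos _ fun i => (hd.2 k i).1

lemma row2_tprod_sqrtT_ge (Sig : Tensor R R I₃) (hd : FDiagPos Sig) (hI3 : 0 < I₃)
    (D : Tensor I₁ R I₃) (i : Fin I₁) :
    sigmaMin Sig * row2 D i ≤ row2 (tprod D (sqrtT Sig)) i := by
  have hslice : ∀ (k : Fin I₃) (l : Fin R),
      fSlice (tprod D (sqrtT Sig)) k i l
        = fSlice D k i l * ((Real.sqrt ((fSlice Sig k l l).re)) : ℂ) := by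
    intro k l
    rw [fSlice_tprod, fSlice_sqrtT Sig hd, Matrix.mul_diagonal]
  have key : ∀ (k : Fin I₃) (l : Fin R),
      sigmaMin Sig * Complex.normSq (fSlice D k i l)
        ≤ Complex.normSq (fSlice (tprod D (sqrtT Sig)) k i l) := by
    intro k l
    rw [hslice k l, Complex.normSq_mul, Complex.normSq_ofReal,
      Real.mul_self_sqrt (le_of_lt (hd.2 k l).1)]
    have h1 : sigmaMin Sig ≤ (fSlice Sig k l l).re := sigmaMin_le Sig k l
    have h2 : 0 ≤ Complex.normSq (fSlice D k i l) := Complex.normSq_nonneg _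
    nlinarith
  have hsum : sigmaMin Sig * ((I₃ : ℝ) * row2 D i) ≤ (I₃ : ℝ) * row2 (tprod D (sqrtT Sig)) i := by
    rw [row2_parseval, row2_parseval, Finset.mul_sum]
    refine Finset.sum_le_sum fun l _ => ?_
    rw [Finset.mul_sum]
    exact Finset.sum_le_sum fun k _ => key k l
  have hI : (0 : ℝ) < (I₃ : ℝ) := by exact_mod_cast hI3
  nlinarith [hsum]

end RTPCAaux
namespace RTPCAaux
open RTPCA

variable {I₁ I₂ I₃ J R : ℕ}

lemma fSlice_neg (A : Tensor I₁ I₂ I₃) (k : Fin I₃) : fSlice (-A) k = -fSlice A k := by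
  ext i j
  simp [fSlice_apply, dft_eq, Matrix.neg_apply, neg_mul, Finset.sum_neg_distrib, Pi.neg_apply]

lemma decomp_identity
    (Xs : Tensor I₁ I₂ I₃) (Us : Tensor I₁ R I₃) (Sig : Tensor R R I₃) (Vs : Tensor I₂ R I₃)
    (hsvd : IsSkinnyTSVD Xs Us Sig Vs)
    (Lk : Tensor I₁ R I₃) (Rk : Tensor I₂ R I₃) (Q Qi : Tensor R R I₃)
    (hQ : TInv Q Qi) :
    Xs - tprod Lk (tT Rk)
      = -(tprod (tprod (tprod Lk Q - tprod Us (sqrtT Sig)) (sqrtT Sig)) (tT Vs))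
        - tprod Us (tT (tprod (tprod Rk (tT Qi) - tprod Vs (sqrtT Sig)) (sqrtT Sig)))
        - tprod (tprod Lk Q - tprod Us (sqrtT Sig))
            (tT (tprod Rk (tT Qi) - tprod Vs (sqrtT Sig))) := by
  apply tensor_eq_of_fSlice
  intro k
  rw [hsvd.decomp]
  simp only [fSlice_sub, fSlice_neg, fSlice_tprod, fSlice_tT]
  set U := fSlice Us k with hU
  set V := fSlice Vs k with hV
  set S := fSlice Sig k with hS
  set L := fSlice Lk k with hL
  set Rm := fSlice Rk k with hRm
  set QM := fSlice Q k with hQM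
  set QI := fSlice Qi k with hQI
  set H := fSlice (sqrtT Sig) k with hHdef
  have hd := hsvd.diag
  have hdiag : H = Matrix.diagonal (fun i => ((Real.sqrt ((S i i).re)) : ℂ)) := by
    rw [hHdef, fSlice_sqrtT Sig hd k]
  have hHt : Hᴴ = H := by
    rw [hdiag]
    ext a b
    by_cases hab : a = b
    · subst hab
      simp [Matrix.conjTranspose_apply, Complex.conj_ofReal]
    · simp [Matrix.conjTranspose_apply, Matrix.diagonal_apply_ne _ hab,
        Matrix.diagonal_apply_ne _ (Ne.symm hab)]
  have hH2 : H * H = S := by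
    rw [hdiag, Matrix.diagonal_mul_diagonal]
    ext l m
    by_cases hlm : l = m
    · subst hlm
      rw [Matrix.diagonal_apply_eq]
      rw [← Complex.ofReal_mul, Real.mul_self_sqrt (le_of_lt (hd.2 k l).1)]
      apply Complex.ext
      · simp; rfl
      · simpa using ((hd.2 k l).2).symm
    · rw [Matrix.diagonal_apply_ne _ hlm]
      exact (hd.1 k l m hlm).symm
  have hQQ : QM * QI = 1 := by
    have h1 : fSlice (tprod Q Qi) k = fSlice (idT R I₃) k := by rw [hQ.1]
    rwa [fSlice_tprod, fSlice_idT] at h1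
  set D1 := L * QM - U * H with hD1
  set D2 := Rm * QIᴴ - V * H with hD2
  have e1 : U * H + D1 = L * QM := by rw [hD1]; abel
  have e2 : V * H + D2 = Rm * QIᴴ := by rw [hD2]; abel
  have hexp : L * Rmᴴ = U * S * Vᴴ + D1 * H * Vᴴ + U * (D2 * H)ᴴ + D1 * D2ᴴ := by
    have step : L * Rmᴴ = (U * H + D1) * (Hᴴ * Vᴴ + D2ᴴ) := by
      rw [e1]
      have : Hᴴ * Vᴴ + D2ᴴ = (V * H + D2)ᴴ := by
        rw [Matrix.conjTranspose_add, Matrix.conjTranspose_mul]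
      rw [this, e2, Matrix.conjTranspose_mul, Matrix.conjTranspose_conjTranspose,
        ← Matrix.mul_assoc, Matrix.mul_assoc L QM QI, hQQ, Matrix.mul_one]
    rw [step, Matrix.add_mul, Matrix.mul_add, Matrix.mul_add]
    have t1 : U * H * (Hᴴ * Vᴴ) = U * S * Vᴴ := by
      rw [hHt, ← Matrix.mul_assoc, Matrix.mul_assoc U H H, hH2]
    have t2 : U * H * D2ᴴ = U * (D2 * H)ᴴ := by
      rw [Matrix.conjTranspose_mul, hHt, Matrix.mul_assoc]
    have t3 : D1 * (Hᴴ * Vᴴ) = D1 * H * Vᴴ := by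
      rw [hHt, Matrix.mul_assoc]
    rw [t1, t2, t3]
    abel
  rw [hexp]
  abel

end RTPCAaux
set_option maxHeartbeats 2000000 in
open RTPCAaux in
/-- entrywise error bound for the low-rank estimate. -/
theorem infNorm_error_bound
    {I₁ I₂ I₃ R : ℕ} (μ : ℝ)
    (Xs : Tensor I₁ I₂ I₃) (Us : Tensor I₁ R I₃) (Sig : Tensor R R I₃) (Vs : Tensor I₂ R I₃)
    (hsvd : IsSkinnyTSVD Xs Us Sig Vs)
    (hinc : Incoherent μ Us Vs)
    (ε τ : ℝ) (hε₀ : 0 < ε) (hε₁ : ε < 1) (hτ₀ : 0 < τ) (hτ₁ : τ ≤ 1) (k : ℕ)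
    (Lk : Tensor I₁ R I₃) (Rk : Tensor I₂ R I₃)
    (Q Qi : Tensor R R I₃)
    (hopt : IsOptAlign Lk (tprod Us (sqrtT Sig)) Rk (tprod Vs (sqrtT Sig)) (sqrtT Sig) Q Qi)
    (hdist : distT Lk (tprod Us (sqrtT Sig)) Rk (tprod Vs (sqrtT Sig)) (sqrtT Sig)
      ≤ ε / Real.sqrt I₃ * τ ^ k * sigmaMin Sig)
    (h2inf : max (Real.sqrt I₁ *
                    twoInfNorm (tprod (tprod Lk Q - tprod Us (sqrtT Sig)) (sqrtT Sig)))
                 (Real.sqrt I₂ *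
                    twoInfNorm (tprod (tprod Rk (tT Qi) - tprod Vs (sqrtT Sig)) (sqrtT Sig)))
             ≤ Real.sqrt (μ * R) * τ ^ k * sigmaMin Sig) :
    infNorm (Xs - tprod Lk (tT Rk))
      ≤ 3 / Real.sqrt ((I₁ : ℝ) * I₂) * (μ * R) * τ ^ k * sigmaMin Sig := by
  classical
  -- degenerate cases
  rcases Nat.eq_zero_or_pos I₁ with hI1 | hI1
  · subst hI1
    have hL : infNorm (Xs - tprod Lk (tT Rk)) = 0 := by
      unfold infNorm
      exact Real.iSup_of_isEmpty _
    rw [hL]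
    have : Real.sqrt (((0:ℕ) : ℝ) * I₂) = 0 := by simp
    rw [this]
    simp
  rcases Nat.eq_zero_or_pos I₂ with hI2 | hI2
  · subst hI2
    haveI : Nonempty (Fin I₁) := Fin.pos_iff_nonempty.mp hI1
    have hL : infNorm (Xs - tprod Lk (tT Rk)) = 0 := by
      unfold infNorm
      have : ∀ i : Fin I₁, (⨆ j : Fin 0, ⨆ t : Fin I₃, |(Xs - tprod Lk (tT Rk)) i j t|) = 0 :=
        fun i => Real.iSup_of_isEmpty _
      rw [iSup_congr this]
      exact ciSup_const
    rw [hL]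
    have : Real.sqrt ((I₁ : ℝ) * ((0:ℕ) : ℝ)) = 0 := by simp
    rw [this]
    simp
  rcases Nat.eq_zero_or_pos I₃ with hI3 | hI3
  · subst hI3
    haveI : Nonempty (Fin I₁) := Fin.pos_iff_nonempty.mp hI1
    haveI : Nonempty (Fin I₂) := Fin.pos_iff_nonempty.mp hI2
    have hL : infNorm (Xs - tprod Lk (tT Rk)) = 0 := by
      unfold infNorm
      have h1 : ∀ (i : Fin I₁) (j : Fin I₂),
          (⨆ t : Fin 0, |(Xs - tprod Lk (tT Rk)) i j t|) = 0 :=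
        fun i j => Real.iSup_of_isEmpty _
      have h2 : ∀ i : Fin I₁,
          (⨆ j : Fin I₂, ⨆ t : Fin 0, |(Xs - tprod Lk (tT Rk)) i j t|) = 0 := by
        intro i
        rw [iSup_congr (h1 i)]
        exact ciSup_const
      rw [iSup_congr h2]
      exact ciSup_const
    have hσ : sigmaMin Sig = 0 := Real.iInf_of_isEmpty _
    rw [hL, hσ]
    simp
  rcases Nat.eq_zero_or_pos R with hR | hR
  · subst hR
    haveI : Nonempty (Fin I₁) := Fin.pos_iff_nonempty.mp hI1
    haveI : Nonempty (Fin I₂) := Fin.pos_iff_nonempty.mp hI2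
    haveI : Nonempty (Fin I₃) := Fin.pos_iff_nonempty.mp hI3
    have hz : ∀ (i : Fin I₁) (j : Fin I₂) (t : Fin I₃), (Xs - tprod Lk (tT Rk)) i j t = 0 := by
      intro i j t
      have e1 : Xs i j t = 0 := by
        rw [hsvd.decomp, tprod_apply]
        simp
      have e2 : tprod Lk (tT Rk) i j t = 0 := by
        rw [tprod_apply]
        simp
      show Xs i j t - tprod Lk (tT Rk) i j t = 0
      rw [e1, e2, sub_zero]
    have hL : infNorm (Xs - tprod Lk (tT Rk)) = 0 := by
      unfold infNorm
      have : ∀ (i : Fin I₁) (j : Fin I₂) (t : Fin I₃), |(Xs - tprod Lk (tT Rk)) i j t| = 0 :=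
        fun i j t => by rw [hz i j t, abs_zero]
      calc (⨆ i, ⨆ j, ⨆ t, |(Xs - tprod Lk (tT Rk)) i j t|)
          = ⨆ i : Fin I₁, ⨆ j : Fin I₂, ⨆ t : Fin I₃, (0:ℝ) := by
            refine iSup_congr fun i => iSup_congr fun j => iSup_congr fun t => this i j t
        _ = 0 := by rw [iSup_congr fun i => iSup_congr fun j => (ciSup_const : _ = (0:ℝ))]
                    rw [iSup_congr fun i => (ciSup_const : _ = (0:ℝ))]
                    exact ciSup_const
    rw [hL]
    have : μ * ((0:ℕ) : ℝ) = 0 := by simp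
    rw [this]
    simp
  -- main case
  haveI : Nonempty (Fin I₁) := Fin.pos_iff_nonempty.mp hI1
  haveI : Nonempty (Fin I₂) := Fin.pos_iff_nonempty.mp hI2
  haveI : Nonempty (Fin I₃) := Fin.pos_iff_nonempty.mp hI3
  haveI : Nonempty (Fin R) := Fin.pos_iff_nonempty.mp hR
  set σ := sigmaMin Sig with hσdef
  set Sh := sqrtT Sig with hShdef
  set DL := tprod Lk Q - tprod Us Sh with hDLdef
  set DR := tprod Rk (tT Qi) - tprod Vs Sh with hDRdef
  set A := tprod DL Sh with hAdef
  set B := tprod DR Sh with hBdef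
  have hσpos : 0 < σ := sigmaMin_pos Sig hsvd.diag hI3 hR
  have hτk1 : τ ^ k ≤ 1 := pow_le_one₀ (le_of_lt hτ₀) hτ₁
  have hτkpos : 0 < τ ^ k := pow_pos hτ₀ k
  have hs1 : (0:ℝ) < Real.sqrt I₁ := Real.sqrt_pos.mpr (by exact_mod_cast hI1)
  have hs2 : (0:ℝ) < Real.sqrt I₂ := Real.sqrt_pos.mpr (by exact_mod_cast hI2)
  -- μ R is nonnegative
  have hμR : 0 ≤ μ * (R:ℝ) := by
    by_contra hneg
    push_neg at hneg
    have hI1' : (0:ℝ) < I₁ := by exact_mod_cast hI1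
    have hdiv : μ * (R:ℝ) / I₁ ≤ 0 := le_of_lt (div_neg_of_neg_of_pos hneg hI1')
    have h0 : Real.sqrt (μ * (R:ℝ) / I₁) = 0 := Real.sqrt_eq_zero'.mpr hdiv
    have hU0 : twoInfNorm Us ≤ 0 := by
      have := hinc.1
      rwa [h0] at this
    have hz : ∀ (a : Fin I₁) (b : Fin R) (c : Fin I₃), Us a b c = 0 := by
      intro a b c
      have h1 : Real.sqrt (row2 Us a) ≤ 0 := le_trans (sqrt_row2_le_twoInfNorm Us a) hU0
      have h1' : Real.sqrt (row2 Us a) = 0 :=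
        le_antisymm h1 (Real.sqrt_nonneg _)
      have h2 : row2 Us a = 0 :=
        le_antisymm (Real.sqrt_eq_zero'.mp h1') (row2_nonneg Us a)
      have h3 : (Us a b c) ^ 2 ≤ row2 Us a := by
        unfold row2
        calc (Us a b c) ^ 2 ≤ ∑ t, (Us a b t) ^ 2 :=
              Finset.single_le_sum (f := fun t => (Us a b t) ^ 2)
                (fun t _ => sq_nonneg _) (Finset.mem_univ c)
          _ ≤ ∑ l, ∑ t, (Us a l t) ^ 2 :=
              Finset.single_le_sum
                (f := fun l => ∑ t, (Us a l t) ^ 2)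
                (fun l _ => Finset.sum_nonneg fun t _ => sq_nonneg _) (Finset.mem_univ b)
      have h4 : (Us a b c) ^ 2 = 0 := le_antisymm (h2 ▸ h3) (sq_nonneg _)
      exact pow_eq_zero_iff (two_ne_zero) |>.mp h4
    have i0 : Fin R := ⟨0, hR⟩
    have k0 : Fin I₃ := ⟨0, hI3⟩
    have horth := congrFun (congrFun (congrFun hsvd.orthU ⟨0, hR⟩) ⟨0, hR⟩) ⟨0, hI3⟩
    rw [RTPCAaux.tprod_apply] at horth
    have hlhs : (∑ l : Fin I₁, ∑ t : Fin I₃,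
        tT Us (⟨0, hR⟩ : Fin R) l t * Us l (⟨0, hR⟩ : Fin R) ((⟨0, hI3⟩ : Fin I₃) - t)) = 0 := by
      refine Finset.sum_eq_zero fun l _ => Finset.sum_eq_zero fun t _ => ?_
      rw [hz l ⟨0, hR⟩ _, mul_zero]
    rw [hlhs] at horth
    have hid : idT R I₃ (⟨0, hR⟩ : Fin R) (⟨0, hR⟩ : Fin R) (⟨0, hI3⟩ : Fin I₃) = 1 := by
      unfold idT
      rw [if_pos ⟨rfl, rfl⟩]
    rw [hid] at horth
    exact one_ne_zero horth.symm
  set m := Real.sqrt (μ * (R:ℝ)) with hmdef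
  set c := m * τ ^ k * σ with hcdef
  have hmnn : 0 ≤ m := Real.sqrt_nonneg _
  have hcnn : 0 ≤ c := by positivity
  have hmm : m * m = μ * (R:ℝ) := Real.mul_self_sqrt hμR
  -- two-to-infinity norm bounds
  have hA2 : twoInfNorm A ≤ c / Real.sqrt I₁ := by
    rw [le_div_iff₀ hs1, mul_comm]
    exact le_trans (le_max_left _ _) h2inf
  have hB2 : twoInfNorm B ≤ c / Real.sqrt I₂ := by
    rw [le_div_iff₀ hs2, mul_comm]
    exact le_trans (le_max_right _ _) h2inf
  have hUs2 : twoInfNorm Us ≤ m / Real.sqrt I₁ := by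
    refine le_trans hinc.1 ?_
    rw [Real.sqrt_div hμR]
  have hVs2 : twoInfNorm Vs ≤ m / Real.sqrt I₂ := by
    refine le_trans hinc.2 ?_
    rw [Real.sqrt_div hμR]
  -- the decomposition identity
  have hdec := decomp_identity Xs Us Sig Vs hsvd Lk Rk Q Qi hopt.1
  -- entrywise bound
  have hentry : ∀ (i : Fin I₁) (j : Fin I₂) (t : Fin I₃),
      |(Xs - tprod Lk (tT Rk)) i j t|
        ≤ 3 / (Real.sqrt I₁ * Real.sqrt I₂) * (μ * R) * τ ^ k * σ := by
    intro i j t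
    have he : (Xs - tprod Lk (tT Rk)) i j t
        = -(tprod A (tT Vs) i j t) - tprod Us (tT B) i j t - tprod DL (tT DR) i j t := by
      rw [hdec]; rfl
    rw [he]
    have habs : |-(tprod A (tT Vs) i j t) - tprod Us (tT B) i j t - tprod DL (tT DR) i j t|
        ≤ |tprod A (tT Vs) i j t| + |tprod Us (tT B) i j t| + |tprod DL (tT DR) i j t| := by
      have h1 : -(tprod A (tT Vs) i j t) - tprod Us (tT B) i j t - tprod DL (tT DR) i j t
          = -((tprod A (tT Vs) i j t + tprod Us (tT B) i j t) + tprod DL (tT DR) i j t) := by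
        ring
      rw [h1, abs_neg]
      calc |(tprod A (tT Vs) i j t + tprod Us (tT B) i j t) + tprod DL (tT DR) i j t|
          ≤ |tprod A (tT Vs) i j t + tprod Us (tT B) i j t| + |tprod DL (tT DR) i j t| :=
            abs_add_le _ _
        _ ≤ _ := by
            have := abs_add_le (tprod A (tT Vs) i j t) (tprod Us (tT B) i j t)
            linarith
    have hT1 : |tprod A (tT Vs) i j t| ≤ (c / Real.sqrt I₁) * (m / Real.sqrt I₂) := by
      refine le_trans (tprod_tT_entry_le A Vs i j t) ?_
      exact mul_le_mul (le_trans (sqrt_row2_le_twoInfNorm A i) hA2)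
        (le_trans (sqrt_row2_le_twoInfNorm Vs j) hVs2)
        (Real.sqrt_nonneg _) (by positivity)
    have hT2 : |tprod Us (tT B) i j t| ≤ (m / Real.sqrt I₁) * (c / Real.sqrt I₂) := by
      refine le_trans (tprod_tT_entry_le Us B i j t) ?_
      exact mul_le_mul (le_trans (sqrt_row2_le_twoInfNorm Us i) hUs2)
        (le_trans (sqrt_row2_le_twoInfNorm B j) hB2)
        (Real.sqrt_nonneg _) (by positivity)
    have hT3 : |tprod DL (tT DR) i j t| ≤ ((c / Real.sqrt I₁) * (c / Real.sqrt I₂)) / σ := by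
      have hrowDL : Real.sqrt (row2 DL i) ≤ Real.sqrt (row2 A i) / Real.sqrt σ := by
        have h := row2_tprod_sqrtT_ge Sig hsvd.diag hI3 DL i
        have h2 : row2 DL i ≤ row2 A i / σ := by
          rw [le_div_iff₀ hσpos]
          calc row2 DL i * σ = σ * row2 DL i := mul_comm _ _
            _ ≤ row2 A i := h
        calc Real.sqrt (row2 DL i) ≤ Real.sqrt (row2 A i / σ) := Real.sqrt_le_sqrt h2
          _ = Real.sqrt (row2 A i) / Real.sqrt σ := Real.sqrt_div (row2_nonneg A i) σ
      have hrowDR : Real.sqrt (row2 DR j) ≤ Real.sqrt (row2 B j) / Real.sqrt σ := by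
        have h := row2_tprod_sqrtT_ge Sig hsvd.diag hI3 DR j
        have h2 : row2 DR j ≤ row2 B j / σ := by
          rw [le_div_iff₀ hσpos]
          calc row2 DR j * σ = σ * row2 DR j := mul_comm _ _
            _ ≤ row2 B j := h
        calc Real.sqrt (row2 DR j) ≤ Real.sqrt (row2 B j / σ) := Real.sqrt_le_sqrt h2
          _ = Real.sqrt (row2 B j) / Real.sqrt σ := Real.sqrt_div (row2_nonneg B j) σ
      have hσs : Real.sqrt σ * Real.sqrt σ = σ := Real.mul_self_sqrt hσpos.le
      calc |tprod DL (tT DR) i j t|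
          ≤ Real.sqrt (row2 DL i) * Real.sqrt (row2 DR j) := tprod_tT_entry_le DL DR i j t
        _ ≤ (Real.sqrt (row2 A i) / Real.sqrt σ) * (Real.sqrt (row2 B j) / Real.sqrt σ) :=
            mul_le_mul hrowDL hrowDR (Real.sqrt_nonneg _) (by positivity)
        _ = (Real.sqrt (row2 A i) * Real.sqrt (row2 B j)) / σ := by
            rw [div_mul_div_comm, hσs]
        _ ≤ ((c / Real.sqrt I₁) * (c / Real.sqrt I₂)) / σ := by
            gcongr
            · exact le_trans (sqrt_row2_le_twoInfNorm A i) hA2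
            · exact le_trans (sqrt_row2_le_twoInfNorm B j) hB2
    have key : (c / Real.sqrt I₁) * (m / Real.sqrt I₂) + (m / Real.sqrt I₁) * (c / Real.sqrt I₂)
        + ((c / Real.sqrt I₁) * (c / Real.sqrt I₂)) / σ
        ≤ 3 / (Real.sqrt I₁ * Real.sqrt I₂) * (μ * R) * τ ^ k * σ := by
      rw [div_mul_div_comm, div_mul_div_comm, div_mul_div_comm, div_right_comm,
        ← add_div, ← add_div]
      have h1 : c * m = μ * R * τ ^ k * σ := by
        calc c * m = m * m * (τ ^ k * σ) := by rw [hcdef]; ring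
          _ = μ * R * τ ^ k * σ := by rw [hmm]; ring
      have h2 : m * c = μ * R * τ ^ k * σ := by rw [mul_comm]; exact h1
      have h3 : c * c / σ ≤ μ * R * τ ^ k * σ := by
        have e : c * c / σ = (m * m) * (τ ^ k * τ ^ k) * σ := by
          rw [hcdef]
          field_simp
        rw [e, hmm]
        have ht2 : τ ^ k * τ ^ k ≤ τ ^ k := by nlinarith [hτk1, hτkpos.le]
        exact mul_le_mul_of_nonneg_right (mul_le_mul_of_nonneg_left ht2 hμR) hσpos.le
      have h4 : c * m + m * c + c * c / σ
          ≤ μ * R * τ ^ k * σ + (μ * R * τ ^ k * σ) + (μ * R * τ ^ k * σ) :=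
        add_le_add (add_le_add h1.le h2.le) h3
      calc (c * m + m * c + c * c / σ) / (Real.sqrt I₁ * Real.sqrt I₂)
          ≤ (μ * R * τ ^ k * σ + (μ * R * τ ^ k * σ) + (μ * R * τ ^ k * σ))
              / (Real.sqrt I₁ * Real.sqrt I₂) := by gcongr
        _ = 3 / (Real.sqrt I₁ * Real.sqrt I₂) * (μ * R) * τ ^ k * σ := by ring
    exact le_trans habs (le_trans (add_le_add (add_le_add hT1 hT2) hT3) key)
  have hsplit : Real.sqrt ((I₁:ℝ) * I₂) = Real.sqrt I₁ * Real.sqrt I₂ :=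
    Real.sqrt_mul (Nat.cast_nonneg I₁) _
  rw [hsplit]
  exact ciSup_le fun i => ciSup_le fun j => ciSup_le fun t => hentry i j t
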